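/- In the Pa^c(σ,γ) model, for every i ∈ {1,…,n} and every q ∈ [0,1), the Value-at-Risk of X_i at level q satisfies VaR_q[X_i] := inf{ x ∈ ℝ : ν{X_i ≤ x} ≥ q } = σ_i·((1−q)^{−1/γ*_i} − 1), where γ*_i = ∑_{j=1}^{n+1} c_{i,j}γ_j. -/

import Mathlib

open MeasureTheory ProbabilityTheory Real

open scoped ENNReal

/-- The `Pa^c(σ,γ)` model measure. -/
noncomputable def paretoModelMeasure (n : ℕ) (γ : Fin (n + 1) → ℝ) :
    Measure ((Fin n → ℝ) × (Fin (n + 1) → ℝ)) :=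
  (Measure.pi fun _ : Fin n => gammaMeasure 1 1).prod
    (Measure.pi fun j => gammaMeasure (γ j) 1)

/-- The coordinates `X_i(λ,y) = σ_i λ_i / ∑_j c_{i,j} y_j`. -/
noncomputable def paretoCoord (n : ℕ) (σ : Fin n → ℝ) (c : Fin n → Fin (n + 1) → ℝ)
    (i : Fin n) (p : (Fin n → ℝ) × (Fin (n + 1) → ℝ)) : ℝ :=
  σ i * p.1 i / ∑ j, c i j * p.2 j

lemma lintegral_pi_prod {m : ℕ} (μ : Fin m → Measure ℝ) [∀ j, SigmaFinite (μ j)]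
    (f : Fin m → ℝ → ℝ≥0∞) (hf : ∀ j, Measurable (f j)) :
    ∫⁻ y, ∏ j, f j (y j) ∂Measure.pi μ = ∏ j, ∫⁻ x, f j x ∂(μ j) := by
  induction m with
  | zero => simp [lintegral_const]
  | succ m ih =>
      have h := (MeasureTheory.measurePreserving_piFinSuccAbove μ 0).symm
      have hF : Measurable fun y : Fin (m+1) → ℝ => ∏ j, f j (y j) :=
        Finset.measurable_prod _ fun j _ => (hf j).comp (measurable_pi_apply j)
      have h2 : Measurable fun w : Fin m → ℝ => ∏ j : Fin m, f j.succ (w j) :=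
        Finset.measurable_prod _ fun j _ => (hf j.succ).comp (measurable_pi_apply j)
      calc ∫⁻ y, ∏ j, f j (y j) ∂Measure.pi μ
          = ∫⁻ z : ℝ × (Fin m → ℝ), ∏ j, f j (((MeasurableEquiv.piFinSuccAbove (fun _ => ℝ) 0).symm z) j)
              ∂((μ 0).prod (Measure.pi fun j => μ (Fin.succAbove 0 j))) := (h.lintegral_comp hF).symm
        _ = ∫⁻ z : ℝ × (Fin m → ℝ), f 0 z.1 * ∏ j : Fin m, f j.succ (z.2 j)
              ∂((μ 0).prod (Measure.pi fun j => μ (Fin.succAbove 0 j))) := by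
            refine lintegral_congr fun z => ?_
            simp [MeasurableEquiv.piFinSuccAbove_symm_apply, Fin.insertNthEquiv,
              Fin.insertNth_zero, Fin.prod_univ_succ, Fin.zero_succAbove]
        _ = (∫⁻ x, f 0 x ∂μ 0) *
              ∫⁻ w, ∏ j : Fin m, f j.succ (w j) ∂(Measure.pi fun j => μ (Fin.succAbove 0 j)) :=
            lintegral_prod_mul (hf 0).aemeasurable h2.aemeasurable
        _ = (∫⁻ x, f 0 x ∂μ 0) * ∏ j : Fin m, ∫⁻ x, f j.succ x ∂μ j.succ := by
            congr 1
            have := ih (fun j => μ (Fin.succAbove 0 j)) (fun j => f j.succ) (fun j => hf j.succ)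
            simpa [Fin.zero_succAbove] using this
        _ = ∏ j, ∫⁻ x, f j x ∂(μ j) := by rw [Fin.prod_univ_succ]

lemma gamma_laplace {a t : ℝ} (ha : 0 < a) (ht : 0 ≤ t) :
    ∫⁻ y, ENNReal.ofReal (Real.exp (-(t * y))) ∂(gammaMeasure a 1)
      = ENNReal.ofReal ((1 + t) ^ (-a)) := by
  have h1t : (0:ℝ) < 1 + t := by linarith
  have hg : Measurable fun y => ENNReal.ofReal (Real.exp (-(t * y))) :=
    ((measurable_id.const_mul t).neg.exp).ennreal_ofReal
  have hpdf : ∀ r : ℝ, Measurable (gammaPDF a r) := fun r =>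
    (measurable_gammaPDFReal a r).ennreal_ofReal
  rw [gammaMeasure, lintegral_withDensity_eq_lintegral_mul _ (hpdf 1) hg]
  have key : ∀ y, (gammaPDF a 1 * fun y => ENNReal.ofReal (Real.exp (-(t * y)))) y
      = ENNReal.ofReal ((1 + t) ^ (-a)) * gammaPDF a (1 + t) y := by
    intro y
    simp only [Pi.mul_apply]
    rcases lt_or_ge y 0 with hy | hy
    · rw [gammaPDF_of_neg hy, gammaPDF_of_neg hy, zero_mul, mul_zero]
    · rw [gammaPDF_of_nonneg hy, gammaPDF_of_nonneg hy,
        ← ENNReal.ofReal_mul (by positivity), ← ENNReal.ofReal_mul (by positivity)]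
      congr 1
      rw [Real.one_rpow]
      have hexp : Real.exp (-((1+t) * y)) = Real.exp (-(1 * y)) * Real.exp (-(t * y)) := by
        rw [← Real.exp_add]; ring_nf
      have hpow : (1 + t) ^ (-a) * (1 + t) ^ a = 1 := by
        rw [← Real.rpow_add h1t]; simp
      have hne : (1+t) ^ a ≠ 0 := (Real.rpow_pos_of_pos h1t a).ne'
      have hG : Real.Gamma a ≠ 0 := (Real.Gamma_pos_of_pos ha).ne'
      rw [hexp, Real.rpow_neg h1t.le]
      field_simp
  simp_rw [key]
  rw [lintegral_const_mul _ (hpdf (1+t)), lintegral_gammaPDF_eq_one ha h1t, mul_one]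

lemma pi_gamma_laplace {m : ℕ} (γ : Fin m → ℝ) (hγ : ∀ j, 0 < γ j)
    (c : Fin m → ℝ) (hc : ∀ j, c j = 0 ∨ c j = 1) {t : ℝ} (ht : 0 ≤ t) :
    ∫⁻ y, ENNReal.ofReal (Real.exp (-(t * ∑ j, c j * y j)))
        ∂(Measure.pi fun j => gammaMeasure (γ j) 1)
      = ENNReal.ofReal ((1 + t) ^ (-(∑ j, c j * γ j))) := by
  haveI : ∀ j, IsProbabilityMeasure (gammaMeasure (γ j) 1) :=
    fun j => isProbabilityMeasure_gammaMeasure (hγ j) one_pos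
  have h1t : (0:ℝ) < 1 + t := by linarith
  have step1 : ∀ y : Fin m → ℝ, ENNReal.ofReal (Real.exp (-(t * ∑ j, c j * y j)))
      = ∏ j, ENNReal.ofReal (Real.exp (-(t * c j * y j))) := by
    intro y
    rw [← ENNReal.ofReal_prod_of_nonneg (fun j _ => (Real.exp_pos _).le), ← Real.exp_sum]
    congr 1
    rw [Finset.mul_sum]
    simp [Finset.sum_neg_distrib, mul_assoc]
  simp_rw [step1]
  rw [lintegral_pi_prod (fun j => gammaMeasure (γ j) 1)
    (fun j x => ENNReal.ofReal (Real.exp (-(t * c j * x)))) (fun j => by fun_prop)]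
  have step2 : ∀ j, ∫⁻ x, ENNReal.ofReal (Real.exp (-(t * c j * x))) ∂gammaMeasure (γ j) 1
      = ENNReal.ofReal ((1 + t) ^ (-(c j * γ j))) := by
    intro j
    rcases hc j with h | h
    · simp [h, Real.rpow_zero, lintegral_const]
    · rw [h, mul_one, gamma_laplace (hγ j) ht, one_mul]
  simp_rw [step2]
  rw [← ENNReal.ofReal_prod_of_nonneg (fun j _ => (Real.rpow_pos_of_pos h1t _).le)]
  congr 1
  rw [← Real.rpow_sum_of_pos h1t]
  congr 1
  simp [Finset.sum_neg_distrib]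

lemma gamma_Iic_zero {a r : ℝ} : gammaMeasure a r (Set.Iic 0) = 0 := by
  rw [gammaMeasure, withDensity_apply _ measurableSet_Iic,
    ← setLIntegral_congr Iio_ae_eq_Iic, lintegral_gammaPDF_of_nonpos le_rfl]

lemma pi_ae_pos {m : ℕ} (γ : Fin m → ℝ) (hγ : ∀ j, 0 < γ j) :
    ∀ᵐ y ∂(Measure.pi fun j => gammaMeasure (γ j) 1), ∀ j, 0 < y j := by
  haveI : ∀ j, IsProbabilityMeasure (gammaMeasure (γ j) 1) :=
    fun j => isProbabilityMeasure_gammaMeasure (hγ j) one_pos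
  rw [ae_all_iff]
  intro j
  have hset : {y : Fin m → ℝ | ¬ 0 < y j} = Function.eval j ⁻¹' (Set.Iic 0) := by
    ext y; simp [not_lt]
  rw [ae_iff, hset, Set.eval_preimage, Measure.pi_pi]
  apply Finset.prod_eq_zero (Finset.mem_univ j)
  simp [gamma_Iic_zero]

lemma exp_Iic {T : ℝ} (hT : 0 ≤ T) :
    gammaMeasure 1 1 (Set.Iic T) = ENNReal.ofReal (1 - Real.exp (-T)) := by
  haveI := isProbabilityMeasure_gammaMeasure (zero_lt_one) (zero_lt_one)
  have h := cdf_expMeasure_eq zero_lt_one T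
  rw [expMeasure, cdf_eq_real, measureReal_def] at h
  rw [← ENNReal.ofReal_toReal (measure_ne_top (gammaMeasure 1 1) _), h, if_pos hT, one_mul]

lemma measurable_paretoCoord (n : ℕ) (σ : Fin n → ℝ) (c : Fin n → Fin (n + 1) → ℝ)
    (i : Fin n) : Measurable (paretoCoord n σ c i) := by
  unfold paretoCoord
  fun_prop

lemma pareto_cdf (n : ℕ) (σ : Fin n → ℝ) (hσ : ∀ i, 0 < σ i)
    (γ : Fin (n+1) → ℝ) (hγ : ∀ j, 0 < γ j)
    (c : Fin n → Fin (n+1) → ℝ) (hc : ∀ i j, c i j = 0 ∨ c i j = 1)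
    (hrow : ∀ i, ∃ j, c i j = 1) (i : Fin n) {x : ℝ} (hx : 0 ≤ x) :
    paretoModelMeasure n γ {p | paretoCoord n σ c i p ≤ x}
      = 1 - ENNReal.ofReal ((1 + x / σ i) ^ (-(∑ j, c i j * γ j))) := by
  haveI h2 : ∀ j, IsProbabilityMeasure (gammaMeasure (γ j) 1) :=
    fun j => isProbabilityMeasure_gammaMeasure (hγ j) one_pos
  haveI h1 : IsProbabilityMeasure (gammaMeasure (1:ℝ) 1) :=
    isProbabilityMeasure_gammaMeasure one_pos one_pos
  set t : ℝ := x / σ i with ht_def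
  have ht : 0 ≤ t := div_nonneg hx (hσ i).le
  have hA : MeasurableSet {p : (Fin n → ℝ) × (Fin (n+1) → ℝ) | paretoCoord n σ c i p ≤ x} :=
    measurableSet_le (measurable_paretoCoord n σ c i) measurable_const
  rw [paretoModelMeasure, Measure.prod_apply_symm hA]
  have key : ∀ᵐ y ∂(Measure.pi fun j => gammaMeasure (γ j) 1),
      (Measure.pi fun _ : Fin n => gammaMeasure (1:ℝ) 1)
          ((fun l => (l, y)) ⁻¹' {p | paretoCoord n σ c i p ≤ x})
        = 1 - ENNReal.ofReal (Real.exp (-(t * ∑ j, c i j * y j))) := by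
    filter_upwards [pi_ae_pos γ hγ] with y hy
    have hS : 0 < ∑ j, c i j * y j := by
      obtain ⟨j0, hj0⟩ := hrow i
      refine Finset.sum_pos' (fun j _ => ?_) ⟨j0, Finset.mem_univ j0, ?_⟩
      · rcases hc i j with h | h <;> simp [h, (hy j).le]
      · rw [hj0, one_mul]; exact hy j0
    set S := ∑ j, c i j * y j
    have hpre : (fun l => (l, y)) ⁻¹' {p | paretoCoord n σ c i p ≤ x}
        = Function.eval i ⁻¹' (Set.Iic (x * S / σ i)) := by
      ext l
      simp only [Set.mem_preimage, Set.mem_setOf_eq, paretoCoord, Set.mem_Iic,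
        Function.eval]
      rw [div_le_iff₀ hS, le_div_iff₀ (hσ i), mul_comm (l i) (σ i)]
    rw [hpre, Set.eval_preimage, Measure.pi_pi]
    rw [Finset.prod_eq_single i (fun j _ hj => by simp [Function.update_of_ne hj])
      (fun h => absurd (Finset.mem_univ i) h)]
    rw [Function.update_self, exp_Iic (div_nonneg (mul_nonneg hx hS.le) (hσ i).le)]
    have hTT : x * S / σ i = t * S := by rw [ht_def]; ring
    rw [hTT, ENNReal.ofReal_sub _ (Real.exp_pos _).le, ENNReal.ofReal_one]
  rw [lintegral_congr_ae key]
  have hfmeas : Measurable fun y : Fin (n+1) → ℝ =>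
      ENNReal.ofReal (Real.exp (-(t * ∑ j, c i j * y j))) := by fun_prop
  have hfin : ∫⁻ y, ENNReal.ofReal (Real.exp (-(t * ∑ j, c i j * y j)))
      ∂(Measure.pi fun j => gammaMeasure (γ j) 1)
      = ENNReal.ofReal ((1 + t) ^ (-(∑ j, c i j * γ j))) :=
    pi_gamma_laplace γ hγ (c i) (hc i) ht
  rw [lintegral_sub hfmeas (by rw [hfin]; exact ENNReal.ofReal_ne_top)
    (by
      filter_upwards [pi_ae_pos γ hγ] with y hy
      have hS : 0 ≤ ∑ j, c i j * y j := by
        refine Finset.sum_nonneg fun j _ => ?_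
        rcases hc i j with h | h <;> simp [h, (hy j).le]
      calc ENNReal.ofReal (Real.exp (-(t * ∑ j, c i j * y j)))
          ≤ ENNReal.ofReal 1 := ENNReal.ofReal_le_ofReal
            (Real.exp_le_one_iff.mpr (by nlinarith))
        _ = 1 := ENNReal.ofReal_one)]
  rw [lintegral_const, one_mul, measure_univ, hfin]

lemma pareto_cdf_neg (n : ℕ) (σ : Fin n → ℝ) (hσ : ∀ i, 0 < σ i)
    (γ : Fin (n+1) → ℝ) (hγ : ∀ j, 0 < γ j)
    (c : Fin n → Fin (n+1) → ℝ) (hc : ∀ i j, c i j = 0 ∨ c i j = 1)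
    (hrow : ∀ i, ∃ j, c i j = 1) (i : Fin n) {x : ℝ} (hx : x < 0) :
    paretoModelMeasure n γ {p | paretoCoord n σ c i p ≤ x} = 0 := by
  haveI h2 : ∀ j, IsProbabilityMeasure (gammaMeasure (γ j) 1) :=
    fun j => isProbabilityMeasure_gammaMeasure (hγ j) one_pos
  haveI h1 : IsProbabilityMeasure (gammaMeasure (1:ℝ) 1) :=
    isProbabilityMeasure_gammaMeasure one_pos one_pos
  have hbad1 := pi_ae_pos (fun _ : Fin n => (1:ℝ)) (fun _ => one_pos)
  have hbad2 := pi_ae_pos γ hγ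
  rw [ae_iff] at hbad1 hbad2
  refine measure_mono_null (t := {p : (Fin n → ℝ) × (Fin (n+1) → ℝ) | ¬ ∀ j, 0 < p.1 j}
        ∪ {p : (Fin n → ℝ) × (Fin (n+1) → ℝ) | ¬ ∀ j, 0 < p.2 j}) ?_ ?_
  · intro p hp
    by_contra hcon
    simp only [Set.mem_union, Set.mem_setOf_eq, not_or, not_not] at hcon
    obtain ⟨hl, hy⟩ := hcon
    have hS : 0 < ∑ j, c i j * p.2 j := by
      obtain ⟨j0, hj0⟩ := hrow i
      refine Finset.sum_pos' (fun j _ => ?_) ⟨j0, Finset.mem_univ j0, ?_⟩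
      · rcases hc i j with h | h <;> simp [h, (hy j).le]
      · rw [hj0, one_mul]; exact hy j0
    have : 0 < paretoCoord n σ c i p := by
      unfold paretoCoord
      exact div_pos (mul_pos (hσ i) (hl i)) hS
    have hp' : paretoCoord n σ c i p ≤ x := hp
    linarith
  · rw [paretoModelMeasure]
    apply measure_union_null
    · have : {p : (Fin n → ℝ) × (Fin (n+1) → ℝ) | ¬ ∀ j, 0 < p.1 j}
          = {l : Fin n → ℝ | ¬ ∀ j, 0 < l j} ×ˢ Set.univ := by
        ext p; simp
      rw [this, Measure.prod_prod, hbad1, zero_mul]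
    · have : {p : (Fin n → ℝ) × (Fin (n+1) → ℝ) | ¬ ∀ j, 0 < p.2 j}
          = Set.univ ×ˢ {y : Fin (n+1) → ℝ | ¬ ∀ j, 0 < y j} := by
        ext p; simp
      rw [this, Measure.prod_prod, hbad2, mul_zero]

/-- the Value-at-Risk of `X_i` at level `q` is
`VaR_q[X_i] = σ_i ((1-q)^{-1/γ*_i} - 1)`. -/
theorem value_at_risk_pareto
    (n : ℕ) (hn : 1 ≤ n)
    (σ : Fin n → ℝ) (hσ : ∀ i, 0 < σ i)
    (γ : Fin (n + 1) → ℝ) (hγ : ∀ j, 0 < γ j)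
    (c : Fin n → Fin (n + 1) → ℝ) (hc : ∀ i j, c i j = 0 ∨ c i j = 1)
    (hrow : ∀ i, ∃ j, c i j = 1)
    (i : Fin n) (γs : ℝ) (hγs : γs = ∑ j, c i j * γ j)
    (q : ℝ) (hq : q ∈ Set.Ico (0 : ℝ) 1) :
    sInf {x : ℝ |
        q ≤ (paretoModelMeasure n γ {p | paretoCoord n σ c i p ≤ x}).toReal}
      = σ i * ((1 - q) ^ (-(1 / γs)) - 1) := by
  obtain ⟨hq0, hq1⟩ := hq
  have hγspos : 0 < γs := by
    rw [hγs]
    obtain ⟨j0, hj0⟩ := hrow i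
    refine Finset.sum_pos' (fun j _ => ?_) ⟨j0, Finset.mem_univ j0, ?_⟩
    · rcases hc i j with h | h <;> simp [h, (hγ j).le]
    · rw [hj0, one_mul]; exact hγ j0
  have hFpos : ∀ x : ℝ, 0 ≤ x →
      (paretoModelMeasure n γ {p | paretoCoord n σ c i p ≤ x}).toReal
        = 1 - (1 + x / σ i) ^ (-γs) := by
    intro x hx
    rw [pareto_cdf n σ hσ γ hγ c hc hrow i hx, ← hγs]
    have hb : (1:ℝ) ≤ 1 + x / σ i := le_add_of_nonneg_right (div_nonneg hx (hσ i).le)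
    have hu1 : (1 + x / σ i) ^ (-γs) ≤ 1 :=
      Real.rpow_le_one_of_one_le_of_nonpos hb (by linarith)
    have hu0 : (0:ℝ) < (1 + x / σ i) ^ (-γs) := Real.rpow_pos_of_pos (by linarith) _
    rw [ENNReal.toReal_sub_of_le (ENNReal.ofReal_le_one.mpr hu1) ENNReal.one_ne_top,
      ENNReal.toReal_one, ENNReal.toReal_ofReal hu0.le]
  rcases eq_or_lt_of_le hq0 with hq0' | hq0'
  · -- q = 0
    rw [← hq0']
    have hset : {x : ℝ | (0:ℝ) ≤
        (paretoModelMeasure n γ {p | paretoCoord n σ c i p ≤ x}).toReal} = Set.univ := by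
      ext x; simp [ENNReal.toReal_nonneg]
    rw [hset]
    have hnb : ¬ BddBelow (Set.univ : Set ℝ) := by
      rintro ⟨b, hb⟩
      have := hb (Set.mem_univ (b - 1))
      linarith
    rw [csInf_of_not_bddBelow hnb, Real.sInf_empty]
    simp
  · -- 0 < q
    have h1q : (0:ℝ) < 1 - q := by linarith
    set cq : ℝ := (1 - q) ^ (-(1 / γs)) with hcq
    have hcqpos : 0 < cq := Real.rpow_pos_of_pos h1q _
    have hcq1 : 1 < cq := by
      rw [hcq]
      refine (Real.one_lt_rpow_iff_of_pos h1q).mpr (Or.inr ⟨by linarith, ?_⟩)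
      rw [neg_lt_zero]
      positivity
    have hnegγs : -γs < 0 := neg_lt_zero.mpr hγspos
    have hkey : cq ^ (-γs) = 1 - q := by
      rw [hcq, ← Real.rpow_mul h1q.le]
      have : -(1 / γs) * -γs = 1 := by field_simp
      rw [this, Real.rpow_one]
    have hset : {x : ℝ | q ≤
        (paretoModelMeasure n γ {p | paretoCoord n σ c i p ≤ x}).toReal}
          = Set.Ici (σ i * (cq - 1)) := by
      ext x
      simp only [Set.mem_setOf_eq, Set.mem_Ici]
      rcases lt_or_ge x 0 with hx | hx
      · rw [pareto_cdf_neg n σ hσ γ hγ c hc hrow i hx]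
        simp only [ENNReal.toReal_zero]
        constructor
        · intro h; linarith
        · intro h
          have : 0 < σ i * (cq - 1) := mul_pos (hσ i) (by linarith)
          linarith
      · rw [hFpos x hx]
        have hb : (1:ℝ) ≤ 1 + x / σ i := le_add_of_nonneg_right (div_nonneg hx (hσ i).le)
        have hbpos : (0:ℝ) < 1 + x / σ i := by linarith
        constructor
        · intro h
          have h1 : (1 + x / σ i) ^ (-γs) ≤ cq ^ (-γs) := by rw [hkey]; linarith
          have h3 : cq ≤ 1 + x / σ i :=
            (Real.rpow_le_rpow_iff_of_neg hbpos hcqpos hnegγs).mp h1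
          have h4 : cq - 1 ≤ x / σ i := by linarith
          calc σ i * (cq - 1) ≤ σ i * (x / σ i) :=
                mul_le_mul_of_nonneg_left h4 (hσ i).le
            _ = x := mul_div_cancel₀ x (hσ i).ne'
        · intro h
          have h4 : cq - 1 ≤ x / σ i := by
            rw [le_div_iff₀ (hσ i), mul_comm]; linarith [h]
          have h3 : cq ≤ 1 + x / σ i := by linarith
          have h1 : (1 + x / σ i) ^ (-γs) ≤ cq ^ (-γs) :=
            (Real.rpow_le_rpow_iff_of_neg hbpos hcqpos hnegγs).mpr h3
          rw [hkey] at h1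
          linarith
    rw [hset, csInf_Ici]
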